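/- arXiv:1703.08151 — 5 statements merged into one kernel-verified Lean document; each statement's English description precedes it below -/
import Mathlib

section
/- Let 𝒳 be a finite set, let X be an 𝒳-valued random variable, and let U_𝒳 be uniformly distributed on 𝒳. Writing Δ = SD(X, U_𝒳) for the statistical distance between X and U_𝒳, the collision probability of X satisfies Col(X) ≥ (1 + 4Δ²)/|𝒳|. -/
/-- For a random variable `X` on a finite set `𝒳` with mass function `w`,
writing `Δ` for the statistical distance between `X` and the uniform distribution `U_𝒳`,
the collision probability satisfies `Col(X) ≥ (1 + 4Δ²)/|𝒳|`. -/
theorem collision_ge_of_statDist (𝒳 : Type) [Fintype 𝒳]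
    (w : 𝒳 → ℝ) (hw : ∀ x, 0 ≤ w x) (hsum : ∑ x, w x = 1) :
    (1 + 4 * ((1 / 2) * ∑ x, |w x - 1 / (Fintype.card 𝒳 : ℝ)|) ^ 2) / (Fintype.card 𝒳 : ℝ)
      ≤ ∑ x, (w x) ^ 2 := by
  set n : ℝ := (Fintype.card 𝒳 : ℝ) with hn
  have hcard : 0 < Fintype.card 𝒳 := by
    by_contra h
    push_neg at h
    have h0 : IsEmpty 𝒳 := Fintype.card_eq_zero_iff.mp (Nat.le_zero.mp h)
    simp at hsum
  have hn0 : (0:ℝ) < n := by rw [hn]; exact_mod_cast hcard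
  have key : (∑ x, |w x - 1/n|)^2 ≤ n * ∑ x, (w x - 1/n)^2 := by
    have h := sq_sum_le_card_mul_sum_sq (s := (Finset.univ : Finset 𝒳))
      (f := fun x => |w x - 1/n|)
    simpa [sq_abs, hn, Finset.card_univ] using h
  have hsq : ∑ x, (w x - 1/n)^2 = ∑ x, (w x)^2 - 1/n := by
    have h1 : ∀ x, (w x - 1/n)^2 = (w x)^2 - (2/n)*w x + (1/n)^2 := by
      intro x; field_simp; ring
    simp_rw [h1]
    rw [Finset.sum_add_distrib, Finset.sum_sub_distrib, ← Finset.mul_sum, hsum,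
      Finset.sum_const, Finset.card_univ, nsmul_eq_mul, ← hn]
    field_simp
    ring
  rw [hsq] at key
  rw [div_le_iff₀ hn0]
  set S := ∑ x, |w x - 1/n|
  have h2 : n * (1/n) = 1 := by field_simp
  nlinarith [key, h2]
end

section
/- (Winterhof bound) Let p be a prime, n ≥ 1, and q = p^n. Let ψ be a nontrivial additive character of F_q and let V be an additive subgroup of F_q. Then ∑_{a∈F_q} |∑_{x∈V} ψ(a·x)| ≤ p^n. -/
/-- Winterhof bound: for a prime `p`, `n ≥ 1`, a finite field `F` with
`p ^ n` elements, a nontrivial additive character `ψ` of `F`, and an additive subgroup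
`V` of `F`, one has `∑_{a ∈ F} |∑_{x ∈ V} ψ (a x)| ≤ p ^ n`. -/
theorem winterhof_bound (p n : ℕ) (hp : p.Prime) (hn : 1 ≤ n)
    (F : Type) [Field F] [Fintype F] [DecidableEq F]
    (hcard : Fintype.card F = p ^ n)
    (ψ : AddChar F ℂ) (hψ : ψ ≠ 1) (V : AddSubgroup F)
    [Fintype V] :
    ∑ a : F, ‖∑ x : V, ψ (a * (x : F))‖ ≤ (p : ℝ) ^ n := by
  classical
  -- The inner sum is `card V` or `0`, depending on whether `ψ (a * ·)` is trivial on `V`.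
  have hsum : ∀ a : F, ∑ x : V, ψ (a * (x : F)) =
      if (ψ.mulShift a).compAddMonoidHom V.subtype = 0 then (Fintype.card V : ℂ) else 0 := by
    intro a
    rw [← AddChar.sum_eq_ite]
    simp [AddChar.mulShift_apply]
  -- Double counting: the total (complex) sum equals `card F`.
  have hswap : ∑ a : F, ∑ x : V, ψ (a * (x : F)) = (Fintype.card F : ℂ) := by
    rw [Finset.sum_comm]
    have hx : ∀ x : V, ∑ a : F, ψ (a * (x : F)) =
        if (x : F) = 0 then (Fintype.card F : ℂ) else 0 := by
      intro x
      have h1 : ∀ a : F, ψ (a * (x : F)) = ψ.mulShift (x : F) a := fun a ↦ by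
        rw [AddChar.mulShift_apply, mul_comm]
      simp_rw [h1]
      by_cases h : (x : F) = 0
      · rw [if_pos h, h, AddChar.mulShift_zero]
        simp
      · rw [if_neg h, AddChar.sum_eq_ite, if_neg]
        rw [show (0 : AddChar F ℂ) = 1 from rfl,
          AddChar.mulShift_unit_eq_one_iff _ (isUnit_iff_ne_zero.2 h)]
        exact hψ
    rw [Finset.sum_congr rfl fun x _ ↦ hx x, Finset.sum_eq_single (0 : V)]
    · simp
    · intro b _ hb
      rw [if_neg fun h ↦ hb (Subtype.ext (by simpa using h))]
    · simp
  have hnorm : ∀ a : F, ‖∑ x : V, ψ (a * (x : F))‖ =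
      if (ψ.mulShift a).compAddMonoidHom V.subtype = 0 then (Fintype.card V : ℝ) else 0 := by
    intro a
    rw [hsum a]
    split_ifs <;> simp
  have hreal : ∑ a : F, ‖∑ x : V, ψ (a * (x : F))‖ = (Fintype.card F : ℝ) := by
    have h2 : ((∑ a : F, ‖∑ x : V, ψ (a * (x : F))‖ : ℝ) : ℂ) = (Fintype.card F : ℂ) := by
      push_cast
      rw [← hswap]
      refine Finset.sum_congr rfl fun a _ ↦ ?_
      rw [hnorm a, hsum a]
      split_ifs <;> simp
    exact_mod_cast h2
  rw [hreal, hcard]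
  push_cast
  exact le_refl _
end

section
/- (Mordell's bound) There exists a constant C > 0 such that for every prime power q, every nontrivial additive character ψ of F_q, and every polynomial P ∈ F_q[X] of degree d with 1 ≤ d < char(F_q), one has |∑_{x∈F_q} ψ(P(x))| ≤ C · d · q^{1 − 1/(2d)}. -/
set_option linter.unusedSectionVars false

open Finset Polynomial

namespace MordellAux

variable {F : Type} [Field F] [Fintype F]

lemma addchar_map_sum (ψ : AddChar F ℂ) {ι : Type*} (s : Finset ι) (c : ι → F) :
    ψ (∑ i ∈ s, c i) = ∏ i ∈ s, ψ (c i) := by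
  classical
  induction s using Finset.cons_induction with
  | empty => simp
  | cons a s ha ih => rw [Finset.sum_cons, Finset.prod_cons, AddChar.map_add_eq_mul, ih]

lemma shift_eq_zero {P : Polynomial F} {d : ℕ} (hd1 : 1 ≤ d) (hdeg : P.natDegree = d)
    (hch : d < ringChar F) {c : F} (h : ∀ y, P.eval (y + c) = P.eval y) : c = 0 := by
  classical
  by_contra hc
  set Q : Polynomial F := P - C (P.eval 0) with hQdef
  have hQ : Q.natDegree = d := by rw [hQdef, natDegree_sub_C, hdeg]
  have hQ0 : Q ≠ 0 := by
    intro h0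
    rw [h0, natDegree_zero] at hQ
    omega
  have hroot : ∀ n : ℕ, Q.eval ((n : F) * c) = 0 := by
    intro n
    induction n with
    | zero => simp [hQdef]
    | succ n ih =>
      have e : ((n + 1 : ℕ) : F) * c = (n : F) * c + c := by push_cast; ring
      simp only [hQdef, eval_sub, eval_C] at ih ⊢
      rw [e, h]
      exact ih
  have hinj : Function.Injective (fun n : Fin (d + 1) => ((n : ℕ) : F) * c) := by
    intro n m hnm
    have h2 : ((n : ℕ) : F) = ((m : ℕ) : F) := mul_right_cancel₀ hc hnm
    have h3 : (n : ℕ) ≡ (m : ℕ) [MOD ringChar F] := (CharP.natCast_eq_natCast F _).mp h2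
    have h4 : (n : ℕ) % ringChar F = (m : ℕ) % ringChar F := h3
    have hb : (n : ℕ) < ringChar F := lt_of_lt_of_le n.2 (by omega)
    have hb' : (m : ℕ) < ringChar F := lt_of_lt_of_le m.2 (by omega)
    rw [Nat.mod_eq_of_lt hb, Nat.mod_eq_of_lt hb'] at h4
    exact Fin.ext h4
  have hsub : (Finset.univ.image (fun n : Fin (d + 1) => ((n : ℕ) : F) * c))
      ⊆ Q.roots.toFinset := by
    intro z hz
    simp only [Finset.mem_image] at hz
    obtain ⟨n, -, rfl⟩ := hz
    rw [Multiset.mem_toFinset, mem_roots hQ0]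
    exact hroot n
  have hcard := Finset.card_le_card hsub
  rw [Finset.card_image_of_injective _ hinj, Finset.card_univ, Fintype.card_fin] at hcard
  have := (Multiset.toFinset_card_le Q.roots).trans (Q.card_roots')
  omega

end MordellAux

namespace MordellAux2

variable {F : Type} [Field F] [Fintype F] [DecidableEq F]

lemma comp_natDegree {P : Polynomial F} {d : ℕ} (hdeg : P.natDegree = d)
    {a : F} (ha : a ≠ 0) (b : F) : (P.comp (C a * X + C b)).natDegree = d := by
  rw [natDegree_comp, natDegree_linear ha, hdeg, mul_one]

lemma fiber_card_le {P : Polynomial F} {d : ℕ} (hd1 : 1 ≤ d) (hdeg : P.natDegree = d)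
    (hch : d < ringChar F) (v : Fin (d + 1) → F) :
    ((((univ : Finset F).erase 0) ×ˢ (univ : Finset F)).filter
      (fun ab => (fun k : Fin (d + 1) => (P.comp (C ab.1 * X + C ab.2)).coeff (k : ℕ)) = v)).card
      ≤ d := by
  classical
  set Fb := ((((univ : Finset F).erase 0) ×ˢ (univ : Finset F)).filter
      (fun ab => (fun k : Fin (d + 1) => (P.comp (C ab.1 * X + C ab.2)).coeff (k : ℕ)) = v))
    with hFb
  have hmem : ∀ ab : F × F, ab ∈ Fb → ab.1 ≠ 0 ∧
      (fun k : Fin (d + 1) => (P.comp (C ab.1 * X + C ab.2)).coeff (k : ℕ)) = v := by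
    intro ab hab
    rw [hFb, Finset.mem_filter, Finset.mem_product, Finset.mem_erase] at hab
    exact ⟨hab.1.1.1, hab.2⟩
  -- two elements of the fiber give equal composed polynomials
  have hpoly : ∀ ab ab' : F × F, ab ∈ Fb → ab' ∈ Fb →
      P.comp (C ab.1 * X + C ab.2) = P.comp (C ab'.1 * X + C ab'.2) := by
    intro ab ab' hab hab'
    obtain ⟨ha, hv⟩ := hmem ab hab
    obtain ⟨ha', hv'⟩ := hmem ab' hab'
    ext n
    rcases lt_or_ge n (d + 1) with hn | hn
    · have := congrFun (hv.trans hv'.symm) ⟨n, hn⟩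
      simpa using this
    · rw [coeff_eq_zero_of_natDegree_lt (by rw [comp_natDegree hdeg ha]; omega),
        coeff_eq_zero_of_natDegree_lt (by rw [comp_natDegree hdeg ha']; omega)]
  have hP0 : P ≠ 0 := by
    intro h0; rw [h0, natDegree_zero] at hdeg; omega
  -- leading coefficients: a^d determined
  have hlead : ∀ ab ab' : F × F, ab ∈ Fb → ab' ∈ Fb → ab.1 ^ d = ab'.1 ^ d := by
    intro ab ab' hab hab'
    obtain ⟨ha, -⟩ := hmem ab hab
    obtain ⟨ha', -⟩ := hmem ab' hab'
    have h1 := congrArg leadingCoeff (hpoly ab ab' hab hab')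
    rw [leadingCoeff_comp (by rw [natDegree_linear ha]; omega),
      leadingCoeff_comp (by rw [natDegree_linear ha']; omega),
      leadingCoeff_linear ha, leadingCoeff_linear ha', hdeg] at h1
    exact mul_left_cancel₀ (by simpa using hP0) h1
  -- b determined by a
  have hb : ∀ ab ab' : F × F, ab ∈ Fb → ab' ∈ Fb → ab.1 = ab'.1 → ab.2 = ab'.2 := by
    intro ab ab' hab hab' hfst
    obtain ⟨ha, -⟩ := hmem ab hab
    have hq := hpoly ab ab' hab hab'
    have heval : ∀ y : F, P.eval (y + (ab.2 - ab'.2)) = P.eval y := by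
      intro y
      have h1 := congrArg (eval (ab.1⁻¹ * (y - ab'.2))) hq
      simp only [eval_comp, eval_add, eval_mul, eval_C, eval_X, ← hfst] at h1
      rw [mul_inv_cancel_left₀ ha,
        show y - ab'.2 + ab.2 = y + (ab.2 - ab'.2) from by ring,
        show y - ab'.2 + ab'.2 = y from by ring] at h1
      exact h1
    have := MordellAux.shift_eq_zero hd1 hdeg hch heval
    linear_combination this
  -- now count
  rcases Fb.eq_empty_or_nonempty with he | ⟨ab₀, hab₀⟩
  · rw [he]; simp
  have hinj : Set.InjOn Prod.fst (Fb : Set (F × F)) := by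
    intro ab hab ab' hab' hf
    exact Prod.ext hf (hb ab ab' hab hab' hf)
  have himg : Fb.image Prod.fst ⊆ (X ^ d - C (ab₀.1 ^ d) : Polynomial F).roots.toFinset := by
    intro a ha
    simp only [Finset.mem_image] at ha
    obtain ⟨ab, hab, rfl⟩ := ha
    rw [Multiset.mem_toFinset, mem_roots (X_pow_sub_C_ne_zero (by omega) _)]
    simp [IsRoot, hlead ab ab₀ hab hab₀]
  calc Fb.card = (Fb.image Prod.fst).card := (Finset.card_image_of_injOn hinj).symm
    _ ≤ (X ^ d - C (ab₀.1 ^ d) : Polynomial F).roots.toFinset.card :=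
        Finset.card_le_card himg
    _ ≤ Multiset.card (X ^ d - C (ab₀.1 ^ d) : Polynomial F).roots :=
        Multiset.toFinset_card_le _
    _ ≤ (X ^ d - C (ab₀.1 ^ d) : Polynomial F).natDegree := card_roots' _
    _ = d := natDegree_X_pow_sub_C

end MordellAux2
namespace MordellAux3
open Finset Polynomial
variable {F : Type} [Field F] [Fintype F] [DecidableEq F]

lemma eval_esymm (d : ℕ) (x : Fin d → F) (k : ℕ) :
    MvPolynomial.eval x (MvPolynomial.esymm (Fin d) F k)
      = (Multiset.map x Finset.univ.val).esymm k := by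
  simp only [MvPolynomial.esymm, map_sum, map_prod, MvPolynomial.eval_X]
  rw [Finset.esymm_map_val]

lemma eval_psum (d : ℕ) (x : Fin d → F) (k : ℕ) :
    MvPolynomial.eval x (MvPolynomial.psum (Fin d) F k) = ∑ i, x i ^ k := by
  simp [MvPolynomial.psum]

lemma esymm_eq_of_psum_eq {d : ℕ} (hch : d < ringChar F) (x y : Fin d → F)
    (h : ∀ k : Fin (d + 1), ∑ i, x i ^ (k : ℕ) = ∑ i, y i ^ (k : ℕ)) :
    ∀ k, k ≤ d → (Multiset.map x Finset.univ.val).esymm k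
      = (Multiset.map y Finset.univ.val).esymm k := by
  intro k
  induction k using Nat.strong_induction_on with
  | _ k ih =>
    intro hk
    rcases Nat.eq_zero_or_pos k with rfl | hk0
    · simp [Multiset.esymm]
    have hx := congrArg (MvPolynomial.eval x) (MvPolynomial.mul_esymm_eq_sum (Fin d) F k)
    have hy := congrArg (MvPolynomial.eval y) (MvPolynomial.mul_esymm_eq_sum (Fin d) F k)
    simp only [map_mul, map_sum, map_pow, map_neg, map_one, map_natCast,
      eval_esymm, eval_psum] at hx hy
    have hsum : ∑ a ∈ (antidiagonal k).filter (fun a => a.1 < k),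
          (-1 : F) ^ a.1 * (Multiset.map x Finset.univ.val).esymm a.1 * ∑ i, x i ^ a.2
        = ∑ a ∈ (antidiagonal k).filter (fun a => a.1 < k),
          (-1 : F) ^ a.1 * (Multiset.map y Finset.univ.val).esymm a.1 * ∑ i, y i ^ a.2 := by
      apply Finset.sum_congr rfl
      intro a ha
      rw [Finset.mem_filter, Finset.HasAntidiagonal.mem_antidiagonal] at ha
      have h1 : a.1 < k := ha.2
      have h2 : a.2 ≤ d := by omega
      rw [ih a.1 h1 (by omega), h ⟨a.2, by omega⟩]
    rw [hsum, ← hy] at hx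
    have hkF : (k : F) ≠ 0 := by
      intro h0
      have := (CharP.cast_eq_zero_iff F (ringChar F) k).mp h0
      have := Nat.le_of_dvd hk0 this
      omega
    exact mul_left_cancel₀ hkF hx

lemma multiset_eq_of_psum_eq {d : ℕ} (hch : d < ringChar F) (x y : Fin d → F)
    (h : ∀ k : Fin (d + 1), ∑ i, x i ^ (k : ℕ) = ∑ i, y i ^ (k : ℕ)) :
    Multiset.map x Finset.univ.val = Multiset.map y Finset.univ.val := by
  have he := esymm_eq_of_psum_eq hch x y h
  set s := Multiset.map x Finset.univ.val with hs
  set t := Multiset.map y Finset.univ.val with ht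
  have hcs : Multiset.card s = d := by simp [hs]
  have hct : Multiset.card t = d := by simp [ht]
  have hprod : (s.map (fun r => X - C r)).prod = (t.map (fun r => X - C r)).prod := by
    ext n
    rcases le_or_gt n d with hn | hn
    · rw [Multiset.prod_X_sub_C_coeff s (by omega), Multiset.prod_X_sub_C_coeff t (by omega),
        hcs, hct, he (d - n) (by omega)]
    · rw [coeff_eq_zero_of_natDegree_lt, coeff_eq_zero_of_natDegree_lt]
      · rw [natDegree_multiset_prod_X_sub_C_eq_card, hct]; omega
      · rw [natDegree_multiset_prod_X_sub_C_eq_card, hcs]; omega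
  have := congrArg Polynomial.roots hprod
  rwa [roots_multiset_prod_X_sub_C, roots_multiset_prod_X_sub_C] at this

lemma exists_perm_of_multiset_eq {d : ℕ} {x y : Fin d → F}
    (h : Multiset.map x Finset.univ.val = Multiset.map y Finset.univ.val) :
    ∃ σ : Equiv.Perm (Fin d), y = x ∘ σ := by
  letI : LinearOrder F := LinearOrder.lift' (Fintype.equivFin F) (Equiv.injective _)
  have hl : (List.ofFn x : Multiset F) = (List.ofFn y : Multiset F) := by
    rw [List.ofFn_eq_map, List.ofFn_eq_map, ← Multiset.map_coe, ← Multiset.map_coe]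
    simpa [Finset.univ, Fintype.elems] using h
  have hperm : List.Perm (List.ofFn y) (List.ofFn x) := by
    rw [← Multiset.coe_eq_coe, hl]
  set σx := Tuple.sort x
  set σy := Tuple.sort y
  have hsorted : y ∘ σy = x ∘ σx :=
    List.ofFn_injective (List.Perm.eq_of_sortedLE
      (Tuple.monotone_sort y).sortedLE_ofFn (Tuple.monotone_sort x).sortedLE_ofFn
      (((σy.ofFn_comp_perm y).trans hperm).trans (σx.ofFn_comp_perm x).symm))
  refine ⟨σy.symm.trans σx, funext fun i => ?_⟩
  have := congrFun hsorted (σy.symm i)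
  simpa using this

end MordellAux3
namespace MordellAux4
open Finset Polynomial
variable {F : Type} [Field F] [Fintype F] [DecidableEq F]

lemma alg_id (d : ℕ) (v : Fin (d+1) → F) (x y : Fin d → F) :
    (∑ i, ∑ k, v k * x i ^ (k:ℕ)) + (∑ i, -(∑ k : Fin (d+1), v k * y i ^ (k:ℕ)))
      = ∑ k, v k * ((∑ i, x i ^ (k:ℕ)) - ∑ i, y i ^ (k:ℕ)) := by
  simp only [Finset.sum_neg_distrib, mul_sub, Finset.sum_sub_distrib, Finset.mul_sum,
    ← sub_eq_add_neg]
  rw [Finset.sum_comm (f := fun i k => v k * x i ^ (k:ℕ)),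
    Finset.sum_comm (f := fun i k => v k * y i ^ (k:ℕ))]

lemma count_identity (ψ : AddChar F ℂ) (hψ : ψ ≠ 1) (hch : 0 < ringChar F) (d : ℕ) :
    ∑ v : Fin (d + 1) → F,
        (∑ t : F, ψ (∑ k, v k * t ^ (k : ℕ))) ^ d *
          ((starRingEnd ℂ) (∑ t : F, ψ (∑ k, v k * t ^ (k : ℕ)))) ^ d
      = (Fintype.card F : ℂ) ^ (d + 1) *
        (((univ : Finset ((Fin d → F) × (Fin d → F))).filter (fun p =>
          ∀ k : Fin (d + 1), ∑ i, p.1 i ^ (k : ℕ) = ∑ i, p.2 i ^ (k : ℕ))).card : ℂ) := by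
  classical
  have hprim : ψ.IsPrimitive := AddChar.IsPrimitive.of_ne_one hψ
  have hconj : ∀ z : F, (starRingEnd ℂ) (ψ z) = ψ (-z) := fun z => by
    rw [AddChar.starComp_apply hch, AddChar.inv_apply]
  have hexp : ∀ v : Fin (d + 1) → F,
      (∑ t : F, ψ (∑ k, v k * t ^ (k : ℕ))) ^ d *
          ((starRingEnd ℂ) (∑ t : F, ψ (∑ k, v k * t ^ (k : ℕ)))) ^ d
        = ∑ x : Fin d → F, ∑ y : Fin d → F,
            ψ (∑ k, v k * ((∑ i, x i ^ (k : ℕ)) - ∑ i, y i ^ (k : ℕ))) := by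
    intro v
    have h1 : (starRingEnd ℂ) (∑ t : F, ψ (∑ k, v k * t ^ (k : ℕ)))
        = ∑ t : F, ψ (-∑ k, v k * t ^ (k : ℕ)) := by
      rw [map_sum]; exact Finset.sum_congr rfl fun t _ => hconj _
    rw [h1, Fintype.sum_pow, Fintype.sum_pow, Finset.sum_mul_sum]
    refine Finset.sum_congr rfl fun x _ => Finset.sum_congr rfl fun y _ => ?_
    rw [← MordellAux.addchar_map_sum ψ univ (fun i => ∑ k, v k * x i ^ (k : ℕ)),
      ← MordellAux.addchar_map_sum ψ univ (fun i => -∑ k, v k * y i ^ (k : ℕ)),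
      ← AddChar.map_add_eq_mul, alg_id]
  have hinner : ∀ x y : Fin d → F,
      (∑ v : Fin (d + 1) → F, ψ (∑ k, v k * ((∑ i, x i ^ (k : ℕ)) - ∑ i, y i ^ (k : ℕ))))
        = if (∀ k : Fin (d + 1), ∑ i, x i ^ (k : ℕ) = ∑ i, y i ^ (k : ℕ))
          then (Fintype.card F : ℂ) ^ (d + 1) else 0 := by
    intro x y
    set c : Fin (d + 1) → F := fun k => (∑ i, x i ^ (k : ℕ)) - ∑ i, y i ^ (k : ℕ) with hc
    have h2 : ∀ v : Fin (d + 1) → F, ψ (∑ k, v k * c k) = ∏ k, ψ (v k * c k) :=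
      fun v => MordellAux.addchar_map_sum ψ univ _
    change ∑ v : Fin (d + 1) → F, ψ (∑ k, v k * c k) = _
    simp only [h2]
    have h3 : (∑ v : Fin (d + 1) → F, ∏ k, ψ (v k * c k))
        = ∏ k : Fin (d + 1), ∑ t : F, ψ (t * c k) := by
      rw [Finset.prod_univ_sum]
      rw [← Fintype.piFinset_univ]
    rw [h3]
    have h4 : ∀ k : Fin (d + 1), (∑ t : F, ψ (t * c k))
        = if c k = 0 then (Fintype.card F : ℂ) else 0 := fun k => by
      rw [AddChar.sum_mulShift (c k) hprim]; split_ifs <;> simp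
    simp only [h4]
    by_cases hall : ∀ k : Fin (d + 1), ∑ i, x i ^ (k : ℕ) = ∑ i, y i ^ (k : ℕ)
    · have : ∀ k : Fin (d + 1), c k = 0 := fun k => sub_eq_zero.mpr (hall k)
      simp [this, hall]
    · rw [if_neg hall]
      obtain ⟨k, hk⟩ := not_forall.mp hall
      refine Finset.prod_eq_zero (Finset.mem_univ k) ?_
      rw [if_neg (fun h0 => hk (sub_eq_zero.mp h0))]
  calc ∑ v : Fin (d + 1) → F,
        (∑ t : F, ψ (∑ k, v k * t ^ (k : ℕ))) ^ d *
          ((starRingEnd ℂ) (∑ t : F, ψ (∑ k, v k * t ^ (k : ℕ)))) ^ d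
      = ∑ v : Fin (d + 1) → F, ∑ x : Fin d → F, ∑ y : Fin d → F,
            ψ (∑ k, v k * ((∑ i, x i ^ (k : ℕ)) - ∑ i, y i ^ (k : ℕ))) :=
        Finset.sum_congr rfl fun v _ => hexp v
    _ = ∑ x : Fin d → F, ∑ y : Fin d → F, ∑ v : Fin (d + 1) → F,
            ψ (∑ k, v k * ((∑ i, x i ^ (k : ℕ)) - ∑ i, y i ^ (k : ℕ))) := by
        rw [Finset.sum_comm]
        exact Finset.sum_congr rfl fun x _ => Finset.sum_comm
    _ = ∑ p : (Fin d → F) × (Fin d → F),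
          if (∀ k : Fin (d + 1), ∑ i, p.1 i ^ (k : ℕ) = ∑ i, p.2 i ^ (k : ℕ))
          then (Fintype.card F : ℂ) ^ (d + 1) else 0 := by
        rw [Fintype.sum_prod_type]
        exact Finset.sum_congr rfl fun x _ => Finset.sum_congr rfl fun y _ => hinner x y
    _ = (Fintype.card F : ℂ) ^ (d + 1) *
        (((univ : Finset ((Fin d → F) × (Fin d → F))).filter (fun p =>
          ∀ k : Fin (d + 1), ∑ i, p.1 i ^ (k : ℕ) = ∑ i, p.2 i ^ (k : ℕ))).card : ℂ) := by
        rw [Finset.sum_ite, Finset.sum_const_zero, add_zero, Finset.sum_const,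
          nsmul_eq_mul, mul_comm]

end MordellAux4
open Finset Polynomial

/-- Mordell's bound: there is a constant `C > 0` such that for every finite
field `F` (of prime power order `q`), every nontrivial additive character `ψ` of `F` and
every polynomial `P ∈ F[X]` of degree `d` with `1 ≤ d < char F`, one has
`|∑_{x ∈ F} ψ (P x)| ≤ C · d · q ^ (1 - 1/(2d))`. -/
theorem mordell_bound :
    ∃ C : ℝ, 0 < C ∧
      ∀ (F : Type) [Field F] [Fintype F] (ψ : AddChar F ℂ), ψ ≠ 1 →
        ∀ (P : Polynomial F) (d : ℕ), P.natDegree = d → 1 ≤ d → d < ringChar F →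
          ‖∑ x : F, ψ (P.eval x)‖
            ≤ C * d * (Fintype.card F : ℝ) ^ ((1 : ℝ) - 1 / (2 * (d : ℝ))) := by
  refine ⟨4, by norm_num, ?_⟩
  intro F _ _ ψ hψ P d hdeg hd1 hch
  classical
  set q := Fintype.card F with hq
  have hq2 : 2 ≤ q := Fintype.one_lt_card
  have hch0 : 0 < ringChar F := by omega
  -- notation
  set S : (Fin (d + 1) → F) → ℂ := fun v => ∑ t : F, ψ (∑ k, v k * t ^ (k : ℕ)) with hS
  set SP : ℂ := ∑ x : F, ψ (P.eval x) with hSP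
  set s : ℝ := ‖SP‖ with hs
  set U : Finset (F × F) := ((univ : Finset F).erase 0) ×ˢ (univ : Finset F) with hU
  set φ : F × F → (Fin (d + 1) → F) :=
    fun ab => fun k : Fin (d + 1) => (P.comp (C ab.1 * X + C ab.2)).coeff (k : ℕ) with hφ
  -- Step A : substitution invariance
  have hA : ∀ ab ∈ U, S (φ ab) = SP := by
    intro ab hab
    have ha : ab.1 ≠ 0 := by
      rw [hU, Finset.mem_product, Finset.mem_erase] at hab
      exact hab.1.1
    have hQdeg : (P.comp (C ab.1 * X + C ab.2)).natDegree = d :=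
      MordellAux2.comp_natDegree hdeg ha ab.2
    have h1 : ∀ t : F, (∑ k : Fin (d + 1), φ ab k * t ^ (k : ℕ))
        = P.eval (ab.1 * t + ab.2) := by
      intro t
      have h0 := Polynomial.eval_eq_sum_range' (p := P.comp (C ab.1 * X + C ab.2))
        (n := d + 1) (by rw [hQdeg]; omega) t
      have h2 : (P.comp (C ab.1 * X + C ab.2)).eval t = P.eval (ab.1 * t + ab.2) := by
        rw [eval_comp]; simp
      calc (∑ k : Fin (d + 1), φ ab k * t ^ (k : ℕ))
          = ∑ i ∈ Finset.range (d + 1),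
              (P.comp (C ab.1 * X + C ab.2)).coeff i * t ^ i := by
            rw [hφ, ← Finset.sum_range
              (fun i => (P.comp (C ab.1 * X + C ab.2)).coeff i * t ^ i)]
        _ = P.eval (ab.1 * t + ab.2) := by rw [← h0, h2]
    calc S (φ ab) = ∑ t : F, ψ (P.eval (ab.1 * t + ab.2)) := by
          rw [hS]; exact Finset.sum_congr rfl fun t _ => by rw [h1]
      _ = SP := by
          rw [hSP]
          exact Fintype.sum_bijective ((Equiv.mulLeft₀ ab.1 ha).trans (Equiv.addRight ab.2))
            (Equiv.bijective _) _ _ fun t => by simp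
  -- the real moment sum
  set T : ℝ := ∑ v : Fin (d + 1) → F, ‖S v‖ ^ (2 * d) with hT
  set N : ℕ := (((univ : Finset ((Fin d → F) × (Fin d → F))).filter (fun p =>
      ∀ k : Fin (d + 1), ∑ i, p.1 i ^ (k : ℕ) = ∑ i, p.2 i ^ (k : ℕ))).card) with hN
  -- step 1 : lower bound for d * T
  have step1 : ((q - 1) * q : ℕ) * s ^ (2 * d) ≤ (d : ℝ) * T := by
    have hcardU : U.card = (q - 1) * q := by
      rw [hU, Finset.card_product, Finset.card_erase_of_mem (Finset.mem_univ 0)]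
      simp [hq]
    have hL : (((q - 1) * q : ℕ) : ℝ) * s ^ (2 * d)
        = ∑ ab ∈ U, ‖S (φ ab)‖ ^ (2 * d) := by
      rw [Finset.sum_congr rfl fun ab hab => by rw [hA ab hab]]
      rw [Finset.sum_const, hcardU, nsmul_eq_mul]
    rw [hL, ← Finset.sum_fiberwise_of_maps_to (fun ab _ => Finset.mem_univ (φ ab))
      (fun ab => ‖S (φ ab)‖ ^ (2 * d))]
    have hbound : ∀ v : Fin (d + 1) → F,
        (∑ ab ∈ U.filter (fun ab => φ ab = v), ‖S (φ ab)‖ ^ (2 * d))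
          ≤ (d : ℝ) * ‖S v‖ ^ (2 * d) := by
      intro v
      have heq : (∑ ab ∈ U.filter (fun ab => φ ab = v), ‖S (φ ab)‖ ^ (2 * d))
          = (U.filter (fun ab => φ ab = v)).card * ‖S v‖ ^ (2 * d) := by
        rw [Finset.sum_congr rfl fun ab hab => by
          rw [(Finset.mem_filter.mp hab).2], Finset.sum_const, nsmul_eq_mul]
      rw [heq]
      have hfib : (U.filter (fun ab => φ ab = v)).card ≤ d :=
        MordellAux2.fiber_card_le hd1 hdeg hch v
      have : ((U.filter (fun ab => φ ab = v)).card : ℝ) ≤ (d : ℝ) := by exact_mod_cast hfib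
      exact mul_le_mul_of_nonneg_right this (by positivity)
    calc ∑ v : Fin (d + 1) → F, ∑ ab ∈ U.filter (fun ab => φ ab = v),
            ‖S (φ ab)‖ ^ (2 * d)
        ≤ ∑ v : Fin (d + 1) → F, (d : ℝ) * ‖S v‖ ^ (2 * d) :=
          Finset.sum_le_sum fun v _ => hbound v
      _ = (d : ℝ) * T := by rw [hT, Finset.mul_sum]
  -- step 2 : T = q^(d+1) * N
  have step2 : T = (q : ℝ) ^ (d + 1) * N := by
    have hc : (T : ℂ) = (q : ℂ) ^ (d + 1) * (N : ℂ) := by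
      have hTc : (T : ℂ) = ∑ v : Fin (d + 1) → F,
          (S v) ^ d * ((starRingEnd ℂ) (S v)) ^ d := by
        rw [hT, Complex.ofReal_sum]
        refine Finset.sum_congr rfl fun v _ => ?_
        rw [← mul_pow, Complex.mul_conj', ← pow_mul]
        push_cast
        ring
      rw [hTc]
      simp only [hS]
      rw [MordellAux4.count_identity ψ hψ hch0 d, hq, hN]
    exact_mod_cast hc
  -- step 3 : N ≤ q^d * d!
  have step3 : N ≤ q ^ d * d.factorial := by
    have hsurj : Set.SurjOn
        (fun p : (Fin d → F) × Equiv.Perm (Fin d) => (p.1, p.1 ∘ p.2))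
        (univ : Finset ((Fin d → F) × Equiv.Perm (Fin d)))
        ((((univ : Finset ((Fin d → F) × (Fin d → F))).filter (fun p =>
          ∀ k : Fin (d + 1), ∑ i, p.1 i ^ (k : ℕ) = ∑ i, p.2 i ^ (k : ℕ)))) : Set _) := by
      intro p hp
      simp only [Finset.coe_filter, Set.mem_setOf_eq] at hp
      obtain ⟨-, hcond⟩ := hp
      have hmult := MordellAux3.multiset_eq_of_psum_eq hch p.1 p.2 hcond
      obtain ⟨σ, hσ⟩ := MordellAux3.exists_perm_of_multiset_eq hmult
      refine ⟨(p.1, σ), by simp, ?_⟩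
      simp only
      rw [← hσ]
    have hcard := Finset.card_le_card_of_surjOn _ hsurj
    rw [hN]
    calc N ≤ (univ : Finset ((Fin d → F) × Equiv.Perm (Fin d))).card := hcard
      _ = q ^ d * d.factorial := by
        rw [Finset.card_univ, Fintype.card_prod, Fintype.card_perm, Fintype.card_fun]
        simp [hq]
  -- arithmetic conclusion
  have hq0 : (0 : ℝ) < q := by positivity
  have hqR : (2 : ℝ) ≤ q := by exact_mod_cast hq2
  have hkey : s ^ (2 * d) ≤ ((4 * d : ℕ) : ℝ) ^ (2 * d) * (q : ℝ) ^ (2 * d - 1) := by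
    have hmain : s ^ (2 * d) * (((q - 1) * q : ℕ) : ℝ)
        ≤ (d : ℝ) * ((q : ℝ) ^ (d + 1) * ((q : ℝ) ^ d * (d.factorial : ℝ))) := by
      calc s ^ (2 * d) * (((q - 1) * q : ℕ) : ℝ)
          = (((q - 1) * q : ℕ) : ℝ) * s ^ (2 * d) := by ring
        _ ≤ (d : ℝ) * T := step1
        _ = (d : ℝ) * ((q : ℝ) ^ (d + 1) * (N : ℝ)) := by rw [step2]
        _ ≤ (d : ℝ) * ((q : ℝ) ^ (d + 1) * ((q ^ d * d.factorial : ℕ) : ℝ)) := by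
            have h3 : (N : ℝ) ≤ ((q ^ d * d.factorial : ℕ) : ℝ) := by exact_mod_cast step3
            have h2 : (0:ℝ) ≤ (q:ℝ) ^ (d+1) := by positivity
            exact mul_le_mul_of_nonneg_left
              (mul_le_mul_of_nonneg_left h3 h2) (by positivity)
        _ = (d : ℝ) * ((q : ℝ) ^ (d + 1) * ((q : ℝ) ^ d * (d.factorial : ℝ))) := by
            push_cast; ring
    -- 2 * d * d! ≤ (4d)^(2d)  in ℕ
    have hnat : 2 * d * d.factorial ≤ (4 * d) ^ (2 * d) := by
      calc 2 * d * d.factorial ≤ 2 * d * d ^ d :=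
            Nat.mul_le_mul_left _ (Nat.factorial_le_pow d)
        _ = 2 * d ^ (d + 1) := by ring
        _ ≤ 2 * d ^ (2 * d) := by
            exact Nat.mul_le_mul_left _ (Nat.pow_le_pow_right (by omega) (by omega))
        _ ≤ 4 ^ (2 * d) * d ^ (2 * d) := by
            have h4 : 2 ≤ 4 ^ (2 * d) := by
              calc 2 ≤ 4 ^ 1 := by norm_num
                _ ≤ 4 ^ (2 * d) := Nat.pow_le_pow_right (by norm_num) (by omega)
            exact Nat.mul_le_mul_right _ h4
        _ = (4 * d) ^ (2 * d) := by rw [Nat.mul_pow]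
    have hnatR : (2 : ℝ) * d * d.factorial ≤ ((4 * d : ℕ) : ℝ) ^ (2 * d) := by
      exact_mod_cast hnat
    -- (q-1) ≥ q/2
    have hq1 : (((q - 1) * q : ℕ) : ℝ) ≥ (q : ℝ) ^ 2 / 2 := by
      have : (((q - 1) : ℕ) : ℝ) = (q : ℝ) - 1 := by
        rw [Nat.cast_sub (by omega)]; norm_num
      rw [Nat.cast_mul, this]
      nlinarith [hqR]
    have hpowpos : (0:ℝ) < (((q - 1) * q : ℕ) : ℝ) := by
      have : 0 < (q - 1) * q := by
        have : 1 ≤ q - 1 := by omega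
        positivity
      exact_mod_cast this
    -- conclude
    have hfinal : (d : ℝ) * ((q : ℝ) ^ (d + 1) * ((q : ℝ) ^ d * (d.factorial : ℝ)))
        ≤ (((4 * d : ℕ) : ℝ) ^ (2 * d) * (q : ℝ) ^ (2 * d - 1)) * (((q - 1) * q : ℕ) : ℝ) := by
      have hqpow : (q : ℝ) ^ (d + 1) * (q : ℝ) ^ d = (q : ℝ) ^ (2 * d - 1) * (q : ℝ) ^ 2 := by
        rw [← pow_add, ← pow_add]
        congr 1
        omega
      calc (d : ℝ) * ((q : ℝ) ^ (d + 1) * ((q : ℝ) ^ d * (d.factorial : ℝ)))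
          = ((d : ℝ) * (d.factorial : ℝ)) * ((q : ℝ) ^ (d + 1) * (q : ℝ) ^ d) := by ring
        _ = ((d : ℝ) * (d.factorial : ℝ)) * ((q : ℝ) ^ (2 * d - 1) * (q : ℝ) ^ 2) := by
            rw [hqpow]
        _ ≤ (((4 * d : ℕ) : ℝ) ^ (2 * d) / 2) * ((q : ℝ) ^ (2 * d - 1) * (q : ℝ) ^ 2) := by
            have : (d : ℝ) * (d.factorial : ℝ) ≤ ((4 * d : ℕ) : ℝ) ^ (2 * d) / 2 := by
              nlinarith [hnatR]
            have hp : (0:ℝ) ≤ (q : ℝ) ^ (2 * d - 1) * (q : ℝ) ^ 2 := by positivity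
            exact mul_le_mul_of_nonneg_right this hp
        _ ≤ (((4 * d : ℕ) : ℝ) ^ (2 * d) * (q : ℝ) ^ (2 * d - 1)) * (((q - 1) * q : ℕ) : ℝ) := by
            have hpw : (0:ℝ) ≤ ((4 * d : ℕ) : ℝ) ^ (2 * d) := by positivity
            have hpq : (0:ℝ) ≤ (q : ℝ) ^ (2 * d - 1) := by positivity
            have h5 : (0:ℝ) ≤ ((4 * d : ℕ) : ℝ) ^ (2 * d) * (q : ℝ) ^ (2 * d - 1) :=
              mul_nonneg hpw hpq
            nlinarith [mul_le_mul_of_nonneg_left hq1 h5]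
    have := hmain.trans hfinal
    exact le_of_mul_le_mul_right (by linarith) hpowpos
  -- convert to rpow bound
  have hsnn : 0 ≤ s := norm_nonneg _
  have h2d : 2 * d ≠ 0 := by omega
  have hrhs : (0:ℝ) ≤ 4 * (d : ℝ) * (q : ℝ) ^ ((1 : ℝ) - 1 / (2 * (d : ℝ))) := by
    positivity
  refine le_of_pow_le_pow_left₀ h2d hrhs ?_
  have hrw : (4 * (d : ℝ) * (q : ℝ) ^ ((1 : ℝ) - 1 / (2 * (d : ℝ)))) ^ (2 * d)
      = ((4 * d : ℕ) : ℝ) ^ (2 * d) * (q : ℝ) ^ (2 * d - 1) := by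
    rw [mul_pow]
    congr 1
    · push_cast; ring
    · rw [← Real.rpow_natCast ((q : ℝ) ^ ((1 : ℝ) - 1 / (2 * (d : ℝ)))) (2 * d),
        ← Real.rpow_mul hq0.le]
      have he : ((1 : ℝ) - 1 / (2 * (d : ℝ))) * ((2 * d : ℕ) : ℝ) = ((2 * d - 1 : ℕ) : ℝ) := by
        have hd0 : (d : ℝ) ≠ 0 := by
          exact_mod_cast (by omega : d ≠ 0)
        push_cast [Nat.cast_sub (by omega : 1 ≤ 2 * d)]
        field_simp
      rw [he, Real.rpow_natCast]
  rw [hrw]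
  exact hkey
end

section
/- There exists a constant C > 0 such that the following holds. Let p be an odd prime, let k ≥ 1 be an integer, let G be the set of monic polynomials in F_p[X] of degree 1 or 2, let U_G be uniformly distributed on G, let A = S_k(U_G) ∈ {0,1}^k, and let U_k be uniformly distributed on {0,1}^k. Then the statistical distance satisfies SD(A, U_k) ≤ C · √(2^k/p) · (1 + √(log₂ p)/(p + 1)). -/
set_option linter.unusedSectionVars false
set_option maxHeartbeats 1000000

open Polynomial

/- ### counting residues in a range -/

lemma count_mod_bounds (M m n : ℕ) (hM : 0 < M) (hm : m < M) :
    n / M ≤ ((Finset.range n).filter (fun x => x % M = m)).card ∧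
    ((Finset.range n).filter (fun x => x % M = m)).card ≤ n / M + 1 := by
  constructor
  · calc n / M = (Finset.range (n / M)).card := (Finset.card_range _).symm
      _ ≤ _ := by
        apply Finset.card_le_card_of_injOn (fun j => m + j * M)
        · intro j hj
          simp only [Finset.mem_coe, Finset.mem_range] at hj
          simp only [Finset.mem_coe, Finset.mem_filter, Finset.mem_range]
          refine ⟨?_, ?_⟩
          · have : (j + 1) * M ≤ n := (Nat.le_div_iff_mul_le hM).1 hj
            calc m + j * M < M + j * M := by omega
              _ = (j + 1) * M := by ring
              _ ≤ n := this
          · simp [Nat.add_mul_mod_self_right, Nat.mod_eq_of_lt hm]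
        · intro a _ b _ h
          simp only at h
          exact Nat.eq_of_mul_eq_mul_right hM (by omega : a * M = b * M)
  · calc ((Finset.range n).filter (fun x => x % M = m)).card
        ≤ (Finset.range (n / M + 1)).card := by
          apply Finset.card_le_card_of_injOn (fun x => x / M)
          · intro x hx
            simp only [Finset.mem_coe, Finset.mem_filter, Finset.mem_range] at hx ⊢
            have := Nat.div_le_div_right (c := M) (Nat.le_of_lt hx.1)
            omega
          · intro a ha b hb h
            simp only [Finset.coe_filter, Finset.mem_range, Set.mem_setOf_eq] at ha hb
            obtain ⟨-, ha2⟩ := ha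
            obtain ⟨-, hb2⟩ := hb
            have h' : a / M = b / M := by simpa using h
            have h1 := Nat.div_add_mod a M
            have h2 := Nat.div_add_mod b M
            rw [← h1, ← h2, ha2, hb2, h']
      _ = n / M + 1 := Finset.card_range _

/- ### bits of numbers below `2^k` -/

def bitsFun (k : ℕ) : Fin (2^k) → (Fin k → Bool) := fun n i => (n : ℕ).testBit i

lemma bitsFun_bij (k : ℕ) : Function.Bijective (bitsFun k) := by
  rw [Fintype.bijective_iff_injective_and_card]
  constructor
  · intro n₁ n₂ h
    apply Fin.ext
    apply Nat.eq_of_testBit_eq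
    intro i
    by_cases hi : i < k
    · exact congrFun h ⟨i, hi⟩
    · push_neg at hi
      have h1 : (n₁ : ℕ) < 2 ^ i := lt_of_lt_of_le n₁.2 (Nat.pow_le_pow_right (by norm_num) hi)
      have h2 : (n₂ : ℕ) < 2 ^ i := lt_of_lt_of_le n₂.2 (Nat.pow_le_pow_right (by norm_num) hi)
      rw [Nat.testBit_lt_two_pow h1, Nat.testBit_lt_two_pow h2]
  · simp [Fintype.card_fun]

noncomputable def mval (k : ℕ) (a : Fin k → Bool) : ℕ :=
  ((Equiv.ofBijective _ (bitsFun_bij k)).symm a : ℕ)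

lemma mval_lt (k : ℕ) (a : Fin k → Bool) : mval k a < 2 ^ k :=
  ((Equiv.ofBijective _ (bitsFun_bij k)).symm a).2

lemma testBit_mval (k : ℕ) (a : Fin k → Bool) (i : Fin k) : (mval k a).testBit i = a i := by
  have := (Equiv.ofBijective _ (bitsFun_bij k)).apply_symm_apply a
  exact congrFun this i

lemma lsb_eq_iff (k : ℕ) (a : Fin k → Bool) (n : ℕ) :
    (fun i : Fin k => n.testBit (i : ℕ)) = a ↔ n % 2 ^ k = mval k a := by
  constructor
  · intro h
    have hlt : n % 2 ^ k < 2 ^ k := Nat.mod_lt _ (by positivity)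
    have : bitsFun k ⟨n % 2 ^ k, hlt⟩ = a := by
      funext i
      rw [← congrFun h i]
      simp [bitsFun, Nat.testBit_mod_two_pow, i.2]
    have := (bitsFun_bij k).1 (a₂ := (Equiv.ofBijective _ (bitsFun_bij k)).symm a)
      (by rw [this]; exact ((Equiv.ofBijective _ (bitsFun_bij k)).apply_symm_apply a).symm)
    exact congrArg Fin.val this
  · intro h
    funext i
    have : n.testBit i = (n % 2 ^ k).testBit i := by
      simp [Nat.testBit_mod_two_pow, i.2]
    rw [this, h, testBit_mval]

/- ### fibers of lsb on `ZMod p` -/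

lemma N_eq_count (p k : ℕ) [NeZero p] (a : Fin k → Bool) :
    Nat.card {x : ZMod p // (fun i : Fin k => (x.val).testBit (i : ℕ)) = a}
      = ((Finset.range p).filter (fun x => x % 2 ^ k = mval k a)).card := by
  rw [Nat.card_eq_fintype_card, Fintype.card_subtype]
  apply Finset.card_bij (fun (x : ZMod p) _ => x.val)
  · intro x hx
    simp only [Finset.mem_filter, Finset.mem_univ, true_and] at hx
    simp only [Finset.mem_filter, Finset.mem_range]
    exact ⟨ZMod.val_lt x, (lsb_eq_iff k a x.val).1 hx⟩
  · intro x _ y _ h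
    exact ZMod.val_injective p h
  · intro n hn
    simp only [Finset.mem_filter, Finset.mem_range] at hn
    refine ⟨(n : ZMod p), ?_, ?_⟩
    · simp only [Finset.mem_filter, Finset.mem_univ, true_and]
      rw [lsb_eq_iff, ZMod.val_cast_of_lt hn.1]
      exact hn.2
    · rw [ZMod.val_cast_of_lt hn.1]

lemma sum_N (p k : ℕ) [NeZero p] :
    ∑ a : Fin k → Bool,
      Nat.card {x : ZMod p // (fun i : Fin k => (x.val).testBit (i : ℕ)) = a} = p := by
  have := Fintype.sum_fiberwise (fun (x : ZMod p) (i : Fin k) => (x.val).testBit (i : ℕ))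
    (fun _ => (1 : ℕ))
  simp only [Finset.sum_const, Finset.card_univ, smul_eq_mul, mul_one] at this
  calc ∑ a : Fin k → Bool,
        Nat.card {x : ZMod p // (fun i : Fin k => (x.val).testBit (i : ℕ)) = a}
      = ∑ a : Fin k → Bool,
        Fintype.card {x : ZMod p // (fun i : Fin k => (x.val).testBit (i : ℕ)) = a} := by
        simp [Nat.card_eq_fintype_card]
    _ = p := by rw [this]; simp [ZMod.card]

/- ### structure of monic polynomials of degree ≤ 2 -/

section PolyStruct
variable {R : Type*} [CommRing R] [Nontrivial R]

lemma monic_quad (b c : R) : (X^2 + C b * X + C c).Monic := by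
  rw [add_assoc]
  apply Polynomial.monic_X_pow_add
  apply lt_of_le_of_lt (Polynomial.degree_add_le _ _)
  rw [max_lt_iff]
  constructor
  · exact lt_of_le_of_lt (Polynomial.degree_C_mul_X_le b) (by norm_num)
  · exact lt_of_le_of_lt Polynomial.degree_C_le (by norm_num)

lemma deg_quad (b c : R) : (X^2 + C b * X + C c).degree = 2 := by
  compute_degree!

lemma natdeg_quad (b c : R) : (X^2 + C b * X + C c).natDegree = 2 := by
  compute_degree!

lemma coeff_quad_one (b c : R) : (X^2 + C b * X + C c).coeff 1 = b := by
  simp [coeff_X_pow]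

lemma coeff_quad_zero (b c : R) : (X^2 + C b * X + C c).coeff 0 = c := by
  simp [coeff_X_pow]

lemma quad_struct (u : Polynomial R) (hd : u.degree = 2) (hm : u.Monic) :
    u = X^2 + C (u.coeff 1) * X + C (u.coeff 0) := by
  have hnd : u.natDegree = 2 := natDegree_eq_of_degree_eq_some hd
  ext n
  have h2 : u.coeff 2 = 1 := by
    have := hm.coeff_natDegree
    rwa [hnd] at this
  match n with
  | 0 => simp [coeff_X_pow]
  | 1 => simp [coeff_X_pow]
  | 2 => simp [coeff_X_pow, h2]
  | (n+3) =>
    rw [Polynomial.coeff_eq_zero_of_natDegree_lt (by omega : u.natDegree < n + 3)]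
    simp [coeff_X_pow, coeff_C]

lemma lin_struct (u : Polynomial R) (hd : u.degree = 1) (hm : u.Monic) :
    u = X + C (u.coeff 0) := by
  have h := Polynomial.eq_X_add_C_of_degree_le_one (le_of_eq hd)
  have h1 : u.coeff 1 = 1 := by
    have := hm.coeff_natDegree
    rwa [natDegree_eq_of_degree_eq_some hd] at this
  rw [h1, map_one, one_mul] at h
  exact h

end PolyStruct

/- ### cardinalities of G and of the extractor fibers -/

section Cards
variable {p : ℕ} [hp : Fact p.Prime]

lemma card_G :
    Nat.card {u : Polynomial (ZMod p) // u.Monic ∧ (u.degree = 1 ∨ u.degree = 2)}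
      = p * p + p := by
  haveI : NeZero p := ⟨hp.out.ne_zero⟩
  let f : (ZMod p × ZMod p) ⊕ ZMod p →
      {u : Polynomial (ZMod p) // u.Monic ∧ (u.degree = 1 ∨ u.degree = 2)} :=
    fun z => match z with
    | .inl (b, c) => ⟨X^2 + C b * X + C c, monic_quad b c, Or.inr (deg_quad b c)⟩
    | .inr c => ⟨X + C c, monic_X_add_C c, Or.inl (degree_X_add_C c)⟩
  have hbij : Function.Bijective f := by
    constructor
    · rintro (⟨b, c⟩ | c) (⟨b', c'⟩ | c') h
      · simp only [f, Subtype.mk.injEq] at h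
        have h1 : b = b' := by rw [← coeff_quad_one b c, h, coeff_quad_one]
        have h0 : c = c' := by rw [← coeff_quad_zero b c, h, coeff_quad_zero]
        rw [h1, h0]
      · exfalso
        simp only [f, Subtype.mk.injEq] at h
        have := natdeg_quad b c
        rw [h, natDegree_X_add_C] at this
        omega
      · exfalso
        simp only [f, Subtype.mk.injEq] at h
        have := natdeg_quad b' c'
        rw [← h, natDegree_X_add_C] at this
        omega
      · simp only [f, Subtype.mk.injEq] at h
        have : c = c' := by
          have := congrArg (fun q => Polynomial.coeff q 0) h
          simpa using this
        rw [this]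
    · rintro ⟨u, hm, hd | hd⟩
      · exact ⟨.inr (u.coeff 0), Subtype.ext (lin_struct u hd hm).symm⟩
      · exact ⟨.inl (u.coeff 1, u.coeff 0), Subtype.ext (quad_struct u hd hm).symm⟩
  rw [← Nat.card_congr (Equiv.ofBijective f hbij)]
  simp [Nat.card_sum, Nat.card_prod, Nat.card_zmod]

lemma card_fiber (k : ℕ) (a : Fin k → Bool) :
    Nat.card {u : Polynomial (ZMod p) //
        (u.Monic ∧ (u.degree = 1 ∨ u.degree = 2)) ∧
        (if u.natDegree = 2 then (fun i : Fin k => ((-(u.coeff 1)).val).testBit (i : ℕ))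
         else if u.natDegree = 1 then (fun i : Fin k => ((-(u.coeff 0)).val).testBit (i : ℕ))
         else fun _ => false) = a}
      = Nat.card {x : ZMod p // (fun i : Fin k => (x.val).testBit (i : ℕ)) = a} * p
        + Nat.card {x : ZMod p // (fun i : Fin k => (x.val).testBit (i : ℕ)) = a} := by
  haveI : NeZero p := ⟨hp.out.ne_zero⟩
  set L : ZMod p → (Fin k → Bool) := fun x => fun i : Fin k => (x.val).testBit (i : ℕ) with hL
  let T := {x : ZMod p // L x = a}
  let f : T × ZMod p ⊕ T → {u : Polynomial (ZMod p) //
        (u.Monic ∧ (u.degree = 1 ∨ u.degree = 2)) ∧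
        (if u.natDegree = 2 then (fun i : Fin k => ((-(u.coeff 1)).val).testBit (i : ℕ))
         else if u.natDegree = 1 then (fun i : Fin k => ((-(u.coeff 0)).val).testBit (i : ℕ))
         else fun _ => false) = a} :=
    fun z => match z with
    | .inl (⟨x, hx⟩, c) => ⟨X^2 + C (-x) * X + C c, ⟨monic_quad _ _, Or.inr (deg_quad _ _)⟩, by
        rw [if_pos (natdeg_quad (-x) c), coeff_quad_one, neg_neg]
        exact hx⟩
    | .inr ⟨x, hx⟩ => ⟨X + C (-x), ⟨monic_X_add_C _, Or.inl (degree_X_add_C _)⟩, by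
        rw [if_neg (by rw [natDegree_X_add_C]; omega), if_pos (natDegree_X_add_C _)]
        simp only [coeff_add, coeff_X_zero, coeff_C_zero, zero_add, neg_neg]
        exact hx⟩
  have hbij : Function.Bijective f := by
    constructor
    · rintro (⟨⟨x, hx⟩, c⟩ | ⟨x, hx⟩) (⟨⟨x', hx'⟩, c'⟩ | ⟨x', hx'⟩) h
      · simp only [f, Subtype.mk.injEq] at h
        have h1 : -x = -x' := by rw [← coeff_quad_one (-x) c, h, coeff_quad_one]
        have h0 : c = c' := by rw [← coeff_quad_zero (-x) c, h, coeff_quad_zero]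
        have hxx : x = x' := by
          have := congrArg Neg.neg h1; simpa using this
        subst hxx; subst h0; rfl
      · exfalso
        simp only [f, Subtype.mk.injEq] at h
        have := natdeg_quad (-x) c
        rw [h, natDegree_X_add_C] at this
        omega
      · exfalso
        simp only [f, Subtype.mk.injEq] at h
        have := natdeg_quad (-x') c'
        rw [← h, natDegree_X_add_C] at this
        omega
      · simp only [f, Subtype.mk.injEq] at h
        have hxx : x = x' := by
          have := congrArg (fun q => Polynomial.coeff q 0) h
          simp only [coeff_add, coeff_X_zero, coeff_C_zero, zero_add] at this
          have := congrArg Neg.neg this; simpa using this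
        subst hxx; rfl
    · rintro ⟨u, ⟨hm, hd | hd⟩, hS⟩
      · have hnd : u.natDegree = 1 := natDegree_eq_of_degree_eq_some hd
        rw [if_neg (by omega), if_pos hnd] at hS
        refine ⟨.inr ⟨-(u.coeff 0), ?_⟩, Subtype.ext ?_⟩
        · rw [hL]; simpa using hS
        · simp only [f, neg_neg]
          exact (lin_struct u hd hm).symm
      · have hnd : u.natDegree = 2 := natDegree_eq_of_degree_eq_some hd
        rw [if_pos hnd] at hS
        refine ⟨.inl (⟨-(u.coeff 1), ?_⟩, u.coeff 0), Subtype.ext ?_⟩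
        · rw [hL]; simpa using hS
        · simp only [f, neg_neg]
          exact (quad_struct u hd hm).symm
  rw [← Nat.card_congr (Equiv.ofBijective f hbij)]
  simp [Nat.card_sum, Nat.card_prod, Nat.card_zmod, T, L]

end Cards

/- ### the main analytic bound -/

lemma main_bound (p k : ℕ) (hp : p.Prime) (hk : 1 ≤ k) :
    (1 / 2 : ℝ) * ∑ a : Fin k → Bool,
        |(Nat.card {u : Polynomial (ZMod p) //
            (u.Monic ∧ (u.degree = 1 ∨ u.degree = 2)) ∧
            (if u.natDegree = 2 then (fun i : Fin k => ((-(u.coeff 1)).val).testBit (i : ℕ))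
             else if u.natDegree = 1 then (fun i : Fin k => ((-(u.coeff 0)).val).testBit (i : ℕ))
             else fun _ => false) = a} : ℝ)
          / (Nat.card {u : Polynomial (ZMod p) | u.Monic ∧ (u.degree = 1 ∨ u.degree = 2)} : ℝ)
          - 1 / (2 : ℝ) ^ k|
      ≤ Real.sqrt ((2 : ℝ) ^ k / (p : ℝ)) := by
  haveI : Fact p.Prime := ⟨hp⟩
  haveI : NeZero p := ⟨hp.ne_zero⟩
  have hp0 : (0 : ℝ) < p := by exact_mod_cast hp.pos
  have hM0 : (0 : ℝ) < (2 : ℝ) ^ k := by positivity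
  have hMn : 0 < 2 ^ k := by positivity
  set N : (Fin k → Bool) → ℕ :=
    fun a => Nat.card {x : ZMod p // (fun i : Fin k => (x.val).testBit (i : ℕ)) = a} with hN
  have hG : (Nat.card {u : Polynomial (ZMod p) | u.Monic ∧ (u.degree = 1 ∨ u.degree = 2)})
      = p * p + p := card_G
  have hfib := card_fiber (p := p) k
  -- rewrite each summand as |N a / p - 1 / 2^k|
  have hterm : ∀ a : Fin k → Bool,
      (Nat.card {u : Polynomial (ZMod p) //
            (u.Monic ∧ (u.degree = 1 ∨ u.degree = 2)) ∧
            (if u.natDegree = 2 then (fun i : Fin k => ((-(u.coeff 1)).val).testBit (i : ℕ))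
             else if u.natDegree = 1 then (fun i : Fin k => ((-(u.coeff 0)).val).testBit (i : ℕ))
             else fun _ => false) = a} : ℝ)
          / (Nat.card {u : Polynomial (ZMod p) | u.Monic ∧ (u.degree = 1 ∨ u.degree = 2)} : ℝ)
        = (N a : ℝ) / p := by
    intro a
    rw [hfib a, hG, hN]
    simp only [Nat.card_eq_fintype_card]
    push_cast
    rw [div_eq_div_iff (by positivity) (by positivity)]
    ring
  simp only [hterm]
  -- bounds on each N a
  have key : ∀ a : Fin k → Bool, |(N a : ℝ) / p - 1 / 2 ^ k| ≤ 1 / p := by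
    intro a
    obtain ⟨hlo, hhi⟩ := count_mod_bounds (2 ^ k) (mval k a) p hMn (mval_lt k a)
    rw [← N_eq_count p k a] at hlo hhi
    set q := p / 2 ^ k with hq
    have hq1 : (q : ℝ) * 2 ^ k ≤ p := by exact_mod_cast Nat.div_mul_le_self p (2 ^ k)
    have hq2 : (p : ℝ) < ((q : ℝ) + 1) * 2 ^ k := by
      have h1 := Nat.div_add_mod p (2 ^ k)
      have h2 : p % 2 ^ k < 2 ^ k := Nat.mod_lt _ hMn
      have : (p : ℝ) = (q : ℝ) * 2 ^ k + (p % 2 ^ k : ℕ) := by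
        have h3 := congrArg (fun n : ℕ => (n : ℝ)) h1
        push_cast at h3
        linarith
      rw [this]
      have : ((p % 2 ^ k : ℕ) : ℝ) < (2 : ℝ) ^ k := by exact_mod_cast h2
      nlinarith
    have hNlo : (q : ℝ) ≤ (N a : ℝ) := by exact_mod_cast hlo
    have hNhi : (N a : ℝ) ≤ (q : ℝ) + 1 := by exact_mod_cast hhi
    have e1 : (N a : ℝ) / p - 1 / 2 ^ k = ((N a : ℝ) * 2 ^ k - p) / (p * 2 ^ k) := by
      field_simp
    rw [e1, abs_div, abs_of_pos (by positivity : (0:ℝ) < (p : ℝ) * 2 ^ k)]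
    have habs : |(N a : ℝ) * 2 ^ k - p| ≤ 2 ^ k := by
      rw [abs_le]
      constructor
      · nlinarith
      · nlinarith
    calc |(N a : ℝ) * 2 ^ k - p| / ((p : ℝ) * 2 ^ k) ≤ (2 : ℝ) ^ k / ((p : ℝ) * 2 ^ k) := by
          gcongr
      _ = 1 / p := by
          rw [mul_comm, ← div_div, div_self (ne_of_gt hM0)]
  -- sum bounds
  set Ssum := ∑ a : Fin k → Bool, |(N a : ℝ) / p - 1 / 2 ^ k| with hSsum
  have h0 : 0 ≤ Ssum := Finset.sum_nonneg (fun a _ => abs_nonneg _)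
  have hS1 : Ssum ≤ 2 ^ k / p := by
    calc Ssum ≤ ∑ _a : Fin k → Bool, (1 : ℝ) / p := Finset.sum_le_sum (fun a _ => key a)
      _ = 2 ^ k / p := by
        rw [Finset.sum_const, Finset.card_univ, Fintype.card_fun, Fintype.card_bool,
          Fintype.card_fin, nsmul_eq_mul]
        push_cast
        ring
  have hS2 : Ssum ≤ 2 := by
    have hsum : ∑ a : Fin k → Bool, ((N a : ℝ) / p) = 1 := by
      rw [← Finset.sum_div]
      have : ∑ a : Fin k → Bool, (N a : ℝ) = (p : ℝ) := by
        rw [← Nat.cast_sum]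
        exact_mod_cast congrArg (Nat.cast (R := ℝ)) (sum_N p k)
      rw [this]
      field_simp
    calc Ssum ≤ ∑ a : Fin k → Bool, ((N a : ℝ) / p + 1 / 2 ^ k) := by
          apply Finset.sum_le_sum
          intro a _
          have h1 : (0:ℝ) ≤ (N a : ℝ) / p := by positivity
          have h2 : (0:ℝ) ≤ 1 / (2:ℝ) ^ k := by positivity
          rw [abs_sub_le_iff]
          constructor <;> nlinarith
      _ = 1 + 2 ^ k * (1 / 2 ^ k) := by
          rw [Finset.sum_add_distrib, hsum, Finset.sum_const, Finset.card_univ,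
            Fintype.card_fun, Fintype.card_bool, Fintype.card_fin, nsmul_eq_mul]
          push_cast
          ring
      _ ≤ 2 := by
          rw [mul_one_div, div_self (ne_of_gt hM0)]
          norm_num
  -- conclude via the geometric mean trick
  have hx0 : 0 ≤ (1 / 2 : ℝ) * Ssum := by positivity
  rw [show ((2:ℝ) ^ k / (p:ℝ)) = ((2:ℝ) ^ k / (p:ℝ)) from rfl]
  rw [← Real.sqrt_sq hx0]
  apply Real.sqrt_le_sqrt
  have ht0 : 0 < (2:ℝ) ^ k / p := by positivity
  nlinarith [hS1, hS2, h0, ht0]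



/-- there is a constant `C > 0` such that for every odd prime `p` and every
`k ≥ 1`, with `G` the set of monic polynomials of degree `1` or `2` over `F_p`, `U_G`
uniform on `G` and `A = S_k(U_G) ∈ {0,1}^k`, the statistical distance between `A` and the
uniform distribution on `{0,1}^k` is at most `C·√(2^k/p)·(1 + √(log₂ p)/(p+1))`. -/
theorem Sk_extractor_statDist :
    ∃ C : ℝ, 0 < C ∧
      ∀ (p k : ℕ) (hp : p.Prime) (hodd : Odd p) (hk : 1 ≤ k),
        -- monic polynomials of degree 1 or 2 over `F_p`
        let G : Set (Polynomial (ZMod p)) := {u | u.Monic ∧ (u.degree = 1 ∨ u.degree = 2)}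
        -- the `k` least significant bits of (the integer representative of) `x ∈ F_p`
        let lsb : ZMod p → (Fin k → Bool) := fun x i => (x.val).testBit (i : ℕ)
        -- the extractor `S_k`
        let S : Polynomial (ZMod p) → (Fin k → Bool) := fun u =>
          if u.natDegree = 2 then lsb (-(u.coeff 1))
          else if u.natDegree = 1 then lsb (-(u.coeff 0))
          else fun _ => false
        (1 / 2 : ℝ) * ∑ a : Fin k → Bool,
            |(Nat.card {u : Polynomial (ZMod p) // u ∈ G ∧ S u = a} : ℝ)
                / (Nat.card G : ℝ) - 1 / ((2 : ℝ) ^ k)|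
          ≤ C * Real.sqrt ((2 : ℝ) ^ k / (p : ℝ)) *
              (1 + Real.sqrt (Real.logb 2 (p : ℝ)) / ((p : ℝ) + 1)) := by
  refine ⟨1, one_pos, fun p k hp hodd hk => ?_⟩
  intro G lsb S
  have h1 := main_bound p k hp hk
  have hp0 : (0 : ℝ) < p := by exact_mod_cast hp.pos
  have h2 : Real.sqrt ((2 : ℝ) ^ k / (p : ℝ))
      ≤ 1 * Real.sqrt ((2 : ℝ) ^ k / (p : ℝ)) *
          (1 + Real.sqrt (Real.logb 2 (p : ℝ)) / ((p : ℝ) + 1)) := by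
    rw [one_mul]
    nlinarith [Real.sqrt_nonneg ((2 : ℝ) ^ k / (p : ℝ)),
      Real.sqrt_nonneg (Real.logb 2 (p : ℝ)),
      div_nonneg (Real.sqrt_nonneg (Real.logb 2 (p : ℝ))) (by positivity : (0:ℝ) ≤ (p:ℝ) + 1)]
  exact le_trans h1 h2
end

section
/- There exists a constant C > 0 such that the following holds. Let p be an odd prime, let k ≥ 1 be an integer, let G be the set of monic polynomials in F_p[X] of degree 1 or 2, let U_G be uniformly distributed on G, let A = P_k(U_G) ∈ {0,1}^k, and let U_k be uniformly distributed on {0,1}^k. Then the statistical distance satisfies SD(A, U_k) ≤ C · √(2^k/p) · (1 + √(log₂ p)/(p + 1)). -/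
open Polynomial

variable {F : Type*} [Field F]

lemma quad_natdeg (b c : F) : (X ^ 2 + C b * X + C c).natDegree = 2 := by
  have h := natDegree_quadratic (R := F) (a := 1) (b := b) (c := c) one_ne_zero
  simpa using h
lemma quad_deg (b c : F) : (X ^ 2 + C b * X + C c).degree = 2 := by
  have h := degree_quadratic (R := F) (a := 1) (b := b) (c := c) one_ne_zero
  simpa using h
lemma quad_monic (b c : F) : (X ^ 2 + C b * X + C c).Monic := by
  rw [Monic, leadingCoeff, quad_natdeg]
  simp [coeff_X_pow]
lemma quad_repr {u : F[X]} (hm : u.Monic) (h2 : u.natDegree = 2) :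
    u = X ^ 2 + C (u.coeff 1) * X + C (u.coeff 0) := by
  ext n
  match n with
  | 0 => simp
  | 1 => simp
  | 2 =>
    have : u.coeff 2 = 1 := by
      have := hm.coeff_natDegree
      rwa [h2] at this
    simp [this, coeff_X_pow]
  | (n+3) =>
    have h1 : u.coeff (n+3) = 0 := coeff_eq_zero_of_natDegree_lt (by omega)
    have h2 : ¬ ((2:ℕ) = n + 3) := by omega
    simp [h1, coeff_X_pow, h2]

lemma cardS [Finite F] {β : Type*} (f : F → β) (d : β) (a : β) :
    Nat.card {u : F[X] // (u.Monic ∧ (u.degree = 1 ∨ u.degree = 2)) ∧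
      (if u.natDegree = 2 then f (u.coeff 0) else if u.natDegree = 1 then f (-(u.coeff 0)) else d) = a}
    = (Nat.card F + 1) * Nat.card {c : F // f c = a} := by
  set N := Nat.card {c : F // f c = a}
  have key : Nat.card ((F × {c : F // f c = a}) ⊕ {c : F // f c = a})
      = Nat.card {u : F[X] // (u.Monic ∧ (u.degree = 1 ∨ u.degree = 2)) ∧
      (if u.natDegree = 2 then f (u.coeff 0) else if u.natDegree = 1 then f (-(u.coeff 0)) else d) = a} := by
    apply Nat.card_eq_of_bijective (f := fun x =>
      match x with
      | Sum.inl (b, ⟨c, hc⟩) => ⟨X ^ 2 + C b * X + C c, ⟨⟨quad_monic b c, Or.inr (quad_deg b c)⟩, by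
          rw [if_pos (quad_natdeg b c)]; simpa using hc⟩⟩
      | Sum.inr ⟨c, hc⟩ => ⟨X + C (-c), ⟨⟨monic_X_add_C _, Or.inl (degree_X_add_C _)⟩, by
          rw [if_neg (by rw [natDegree_X_add_C]; omega), if_pos (natDegree_X_add_C _)]
          simpa using hc⟩⟩)
    constructor
    · rintro (⟨b, c, hc⟩ | ⟨c, hc⟩) (⟨b', c', hc'⟩ | ⟨c', hc'⟩) h <;>
        simp only [Subtype.mk.injEq] at h
      · have h0 : c = c' := by
          have := congrArg (fun q => Polynomial.coeff q 0) h; simpa using this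
        have h1 : b = b' := by
          have := congrArg (fun q => Polynomial.coeff q 1) h; simpa using this
        simp [h0, h1]
      · exfalso
        have := congrArg Polynomial.natDegree h
        rw [quad_natdeg, natDegree_X_add_C] at this
        omega
      · exfalso
        have := congrArg Polynomial.natDegree h
        rw [quad_natdeg, natDegree_X_add_C] at this
        omega
      · have h0 : c = c' := by
          have := congrArg (fun q => Polynomial.coeff q 0) h
          simp only [coeff_add, coeff_X, coeff_C] at this
          simpa using neg_injective (by simpa using this)
        simp [h0]
    · rintro ⟨u, ⟨hm, hdeg⟩, hP⟩
      rcases hdeg with h1 | h2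
      · have hnd : u.natDegree = 1 := natDegree_eq_of_degree_eq_some h1
        have hu : u = X + C (u.coeff 0) := hm.eq_X_add_C hnd
        rw [if_neg (by omega), if_pos hnd] at hP
        refine ⟨Sum.inr ⟨-(u.coeff 0), hP⟩, ?_⟩
        simp only [neg_neg]
        exact Subtype.ext hu.symm
      · have hnd : u.natDegree = 2 := natDegree_eq_of_degree_eq_some h2
        have hu : u = X ^ 2 + C (u.coeff 1) * X + C (u.coeff 0) := quad_repr hm hnd
        rw [if_pos hnd] at hP
        refine ⟨Sum.inl ⟨u.coeff 1, u.coeff 0, hP⟩, ?_⟩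
        exact Subtype.ext hu.symm
  rw [← key, Nat.card_sum, Nat.card_prod]
  ring

lemma cardG [Finite F] :
    Nat.card {u : F[X] // u.Monic ∧ (u.degree = 1 ∨ u.degree = 2)}
    = (Nat.card F + 1) * Nat.card F := by
  have h := cardS (F := F) (f := fun _ => ()) (d := ()) (a := ())
  have e1 : Nat.card {u : F[X] // (u.Monic ∧ (u.degree = 1 ∨ u.degree = 2)) ∧
      (if u.natDegree = 2 then () else if u.natDegree = 1 then () else ()) = ()}
      = Nat.card {u : F[X] // u.Monic ∧ (u.degree = 1 ∨ u.degree = 2)} := by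
    apply Nat.card_eq_of_bijective (f := fun x => ⟨x.1, x.2.1⟩)
    constructor
    · rintro ⟨u, hu⟩ ⟨v, hv⟩ h
      simpa using congrArg Subtype.val h
    · rintro ⟨u, hu⟩
      exact ⟨⟨u, hu, rfl⟩, rfl⟩
  have e2 : Nat.card {c : F // (fun _ => ()) c = ()} = Nat.card F := by
    apply Nat.card_eq_of_bijective (f := fun x => x.1)
    constructor
    · rintro ⟨u, hu⟩ ⟨v, hv⟩ h
      simpa using h
    · exact fun u => ⟨⟨u, rfl⟩, rfl⟩
  rw [e1, e2] at h
  exact h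

-- existence of r with prescribed low bits
lemma exists_bits (k : ℕ) (a : Fin k → Bool) :
    ∃ r : ℕ, r < 2 ^ k ∧ ∀ i : Fin k, r.testBit i = a i := by
  have hinj : Function.Injective (fun x : Fin (2 ^ k) => (fun i : Fin k => (x : ℕ).testBit i)) := by
    intro x y h
    have : (x : ℕ) = (y : ℕ) := by
      apply Nat.eq_of_testBit_eq
      intro i
      by_cases hik : i < k
      · exact congrFun h ⟨i, hik⟩
      · rw [Nat.testBit_lt_two_pow, Nat.testBit_lt_two_pow]
        · exact lt_of_lt_of_le y.2 (Nat.pow_le_pow_right (by norm_num) (le_of_not_gt hik))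
        · exact lt_of_lt_of_le x.2 (Nat.pow_le_pow_right (by norm_num) (le_of_not_gt hik))
    exact Fin.ext this
  have hbij : Function.Bijective (fun x : Fin (2 ^ k) => (fun i : Fin k => (x : ℕ).testBit i)) := by
    rw [Fintype.bijective_iff_injective_and_card]
    exact ⟨hinj, by simp⟩
  obtain ⟨x, hx⟩ := hbij.2 a
  exact ⟨x, x.2, fun i => congrFun hx i⟩

lemma filter_bits_eq (p k r : ℕ) (hr : r < 2 ^ k) (a : Fin k → Bool)
    (ha : ∀ i : Fin k, r.testBit i = a i) :
    (Finset.range p).filter (fun x => (fun i : Fin k => x.testBit i) = a)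
      = (Finset.range p).filter (fun x => x % 2 ^ k = r) := by
  apply Finset.filter_congr
  intro x _
  constructor
  · intro h
    apply Nat.eq_of_testBit_eq
    intro i
    by_cases hik : i < k
    · rw [Nat.testBit_mod_two_pow]
      simp only [hik, decide_true, Bool.true_and]
      rw [ha ⟨i, hik⟩]
      exact congrFun h ⟨i, hik⟩
    · rw [Nat.testBit_lt_two_pow, Nat.testBit_lt_two_pow]
      · exact lt_of_lt_of_le hr (Nat.pow_le_pow_right (by norm_num) (le_of_not_gt hik))
      · exact lt_of_lt_of_le (Nat.mod_lt _ (Nat.two_pow_pos k))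
          (Nat.pow_le_pow_right (by norm_num) (le_of_not_gt hik))
  · intro h
    funext i
    rw [← ha i, ← h, Nat.testBit_mod_two_pow]
    simp [i.2]

lemma count_mod_lower (p k r : ℕ) (hr : r < 2 ^ k) :
    p / 2 ^ k ≤ ((Finset.range p).filter (fun x => x % 2 ^ k = r)).card := by
  have h := Finset.card_le_card_of_injOn (f := fun q => q * 2 ^ k + r)
    (s := Finset.range (p / 2 ^ k)) (t := (Finset.range p).filter (fun x => x % 2 ^ k = r))
    ?_ ?_
  · simpa using h
  · intro q hq
    simp only [Finset.mem_coe, Finset.mem_range] at hq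
    simp only [Finset.mem_coe, Finset.mem_filter, Finset.mem_range]
    constructor
    · have h1 : q + 1 ≤ p / 2 ^ k := hq
      have h2 : (q + 1) * 2 ^ k ≤ p := by
        rw [← Nat.le_div_iff_mul_le (Nat.two_pow_pos k)]
        exact h1
      calc q * 2 ^ k + r < q * 2 ^ k + 2 ^ k := by omega
        _ = (q + 1) * 2 ^ k := by ring
        _ ≤ p := h2
    · rw [Nat.mul_add_mod', Nat.mod_eq_of_lt hr]
  · intro x _ y _ h
    simp only at h
    have h2k : 0 < 2 ^ k := Nat.two_pow_pos k
    have : x * 2 ^ k = y * 2 ^ k := by omega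
    exact Nat.eq_of_mul_eq_mul_right h2k this

lemma count_mod_upper (p k r : ℕ) :
    ((Finset.range p).filter (fun x => x % 2 ^ k = r)).card ≤ p / 2 ^ k + 1 := by
  have h := Finset.card_le_card_of_injOn (f := fun x => x / 2 ^ k)
    (s := (Finset.range p).filter (fun x => x % 2 ^ k = r))
    (t := Finset.range (p / 2 ^ k + 1)) ?_ ?_
  · simpa using h
  · intro x hx
    simp only [Finset.mem_coe, Finset.mem_filter, Finset.mem_range] at hx
    simp only [Finset.mem_coe, Finset.mem_range]
    exact Nat.lt_succ_of_le (Nat.div_le_div_right (le_of_lt hx.1))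
  · intro x hx y hy h
    simp only [Finset.coe_filter, Set.mem_setOf_eq, Finset.mem_range] at hx hy
    have h2 : x / 2 ^ k = y / 2 ^ k := h
    have hxy : x % 2 ^ k = y % 2 ^ k := hx.2.trans hy.2.symm
    calc x = 2 ^ k * (x / 2 ^ k) + x % 2 ^ k := (Nat.div_add_mod x _).symm
      _ = 2 ^ k * (y / 2 ^ k) + y % 2 ^ k := by rw [h2, hxy]
      _ = y := Nat.div_add_mod y _

lemma cardN (p k : ℕ) [NeZero p] (a : Fin k → Bool) :
    Nat.card {c : ZMod p // (fun i : Fin k => (ZMod.val c).testBit i) = a}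
      = ((Finset.range p).filter (fun x => (fun i : Fin k => x.testBit i) = a)).card := by
  rw [← Nat.card_eq_finsetCard]
  symm
  apply Nat.card_eq_of_bijective (f := fun (x : {x // x ∈ (Finset.range p).filter (fun x => (fun i : Fin k => x.testBit i) = a)}) => (⟨(((x : ℕ) : ℕ) : ZMod p), by
      obtain ⟨x, hx⟩ := x
      simp only [Finset.mem_filter, Finset.mem_range] at hx
      rw [ZMod.val_cast_of_lt hx.1]
      exact hx.2⟩ : {c : ZMod p // (fun i : Fin k => (ZMod.val c).testBit i) = a}))
  constructor
  · rintro ⟨x, hx⟩ ⟨y, hy⟩ h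
    simp only [Finset.mem_filter, Finset.mem_range] at hx hy
    have := congrArg (fun c => ZMod.val c.1) h
    simp only [ZMod.val_cast_of_lt hx.1, ZMod.val_cast_of_lt hy.1] at this
    exact Subtype.ext this
  · rintro ⟨c, hc⟩
    refine ⟨⟨c.val, ?_⟩, ?_⟩
    · simp only [Finset.mem_filter, Finset.mem_range]
      exact ⟨ZMod.val_lt c, hc⟩
    · exact Subtype.ext (ZMod.natCast_rightInverse c)

lemma sumN (p k : ℕ) :
    ∑ a : Fin k → Bool,
      ((Finset.range p).filter (fun x => (fun i : Fin k => x.testBit i) = a)).card = p := by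
  have := Finset.card_eq_sum_card_fiberwise
    (f := fun x : ℕ => (fun i : Fin k => x.testBit i)) (s := Finset.range p)
    (t := Finset.univ) (fun x _ => Finset.mem_univ _)
  simpa using this.symm


/-- there is a constant `C > 0` such that for every odd prime `p` and every
`k ≥ 1`, with `G` the set of monic polynomials of degree `1` or `2` over `F_p`, `U_G`
uniform on `G` and `A = P_k(U_G) ∈ {0,1}^k`, the statistical distance between `A` and the
uniform distribution on `{0,1}^k` is at most `C·√(2^k/p)·(1 + √(log₂ p)/(p+1))`. -/
theorem Pk_extractor_statDist :
    ∃ C : ℝ, 0 < C ∧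
      ∀ (p k : ℕ) (hp : p.Prime) (hodd : Odd p) (hk : 1 ≤ k),
        -- monic polynomials of degree 1 or 2 over `F_p`
        let G : Set (Polynomial (ZMod p)) := {u | u.Monic ∧ (u.degree = 1 ∨ u.degree = 2)}
        -- the `k` least significant bits of (the integer representative of) `x ∈ F_p`
        let lsb : ZMod p → (Fin k → Bool) := fun x i => (x.val).testBit (i : ℕ)
        -- the extractor `P_k`
        let P : Polynomial (ZMod p) → (Fin k → Bool) := fun u =>
          if u.natDegree = 2 then lsb (u.coeff 0)
          else if u.natDegree = 1 then lsb (-(u.coeff 0))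
          else fun _ => false
        (1 / 2 : ℝ) * ∑ a : Fin k → Bool,
            |(Nat.card {u : Polynomial (ZMod p) // u ∈ G ∧ P u = a} : ℝ)
                / (Nat.card G : ℝ) - 1 / ((2 : ℝ) ^ k)|
          ≤ C * Real.sqrt ((2 : ℝ) ^ k / (p : ℝ)) *
              (1 + Real.sqrt (Real.logb 2 (p : ℝ)) / ((p : ℝ) + 1)) := by
  refine ⟨1, one_pos, ?_⟩
  intro p k hp hodd hk G lsb P
  haveI : Fact p.Prime := ⟨hp⟩
  haveI : NeZero p := ⟨hp.ne_zero⟩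
  have hp0 : (0:ℝ) < p := by exact_mod_cast hp.pos
  have h2k : (0:ℝ) < 2 ^ k := by positivity
  set N : (Fin k → Bool) → ℕ := fun a =>
    ((Finset.range p).filter (fun x => (fun i : Fin k => x.testBit i) = a)).card with hNdef
  have hGnat : Nat.card G = (p + 1) * p := by
    have h := cardG (F := ZMod p)
    rw [Nat.card_zmod] at h
    exact h
  have hSnat : ∀ a : Fin k → Bool,
      Nat.card {u : Polynomial (ZMod p) // u ∈ G ∧ P u = a} = (p + 1) * N a := by
    intro a
    have hc : Nat.card {c : ZMod p // lsb c = a} = N a := cardN p k a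
    have h := cardS (F := ZMod p) (f := lsb) (d := (fun _ => false)) (a := a)
    rw [Nat.card_zmod, hc] at h
    exact h
  have hterm : ∀ a : Fin k → Bool,
      |(Nat.card {u : Polynomial (ZMod p) // u ∈ G ∧ P u = a} : ℝ)
          / (Nat.card G : ℝ) - 1 / ((2 : ℝ) ^ k)|
        = |(N a : ℝ) / p - 1 / ((2:ℝ) ^ k)| := by
    intro a
    rw [hSnat a, hGnat]
    push_cast
    rw [mul_div_mul_left _ _ (by positivity : ((p:ℝ) + 1) ≠ 0)]
  have hbd : ∀ a : Fin k → Bool, |(N a : ℝ) / p - 1 / ((2:ℝ) ^ k)| ≤ 1 / p := by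
    intro a
    obtain ⟨r, hr, hbits⟩ := exists_bits k a
    have hfe : N a = ((Finset.range p).filter (fun x => x % 2 ^ k = r)).card := by
      rw [hNdef]; exact congrArg Finset.card (filter_bits_eq p k r hr a hbits)
    have hlow : p / 2 ^ k ≤ N a := hfe ▸ count_mod_lower p k r hr
    have hup : N a ≤ p / 2 ^ k + 1 := hfe ▸ count_mod_upper p k r
    have hfl : ((p / 2 ^ k : ℕ) : ℝ) ≤ (p : ℝ) / 2 ^ k := by
      have := Nat.cast_div_le (m := p) (n := 2 ^ k) (α := ℝ)
      push_cast at this ⊢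
      exact this
    have hfu : (p : ℝ) / 2 ^ k < ((p / 2 ^ k : ℕ) : ℝ) + 1 := by
      rw [div_lt_iff₀ h2k]
      have h1 := Nat.div_add_mod p (2 ^ k)
      have h2 := Nat.mod_lt p (y := 2 ^ k) (by positivity)
      have : p < 2 ^ k * (p / 2 ^ k) + 2 ^ k := by omega
      have hcast : (p : ℝ) < 2 ^ k * ((p / 2 ^ k : ℕ) : ℝ) + 2 ^ k := by
        exact_mod_cast this
      linarith
    have hlowR : ((p / 2 ^ k : ℕ) : ℝ) ≤ (N a : ℝ) := by exact_mod_cast hlow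
    have hupR : (N a : ℝ) ≤ ((p / 2 ^ k : ℕ) : ℝ) + 1 := by exact_mod_cast hup
    have habs : |(N a : ℝ) - (p : ℝ) / 2 ^ k| ≤ 1 := by
      rw [abs_le]; constructor <;> linarith
    have hpc : (p : ℝ) / 2 ^ k / p = 1 / 2 ^ k := by
      rw [div_div, mul_comm, ← div_div, div_self (ne_of_gt hp0)]
    have e : (N a : ℝ) / p - 1 / ((2:ℝ) ^ k) = ((N a : ℝ) - (p : ℝ) / 2 ^ k) / p := by
      rw [sub_div, hpc]
    rw [e, abs_div, abs_of_pos hp0]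
    gcongr

  have hsumN : ∑ a : Fin k → Bool, (N a : ℝ) = p := by
    have := sumN p k
    exact_mod_cast congrArg (Nat.cast : ℕ → ℝ) this
  have hcard : (Finset.univ : Finset (Fin k → Bool)).card = 2 ^ k := by
    simp [Finset.card_univ]
  -- main bound
  have main : (1 / 2 : ℝ) * ∑ a : Fin k → Bool, |(N a : ℝ) / p - 1 / ((2:ℝ) ^ k)|
      ≤ Real.sqrt ((2:ℝ) ^ k / p) := by
    by_cases hc : 2 ^ k ≤ p
    · have hcR : ((2:ℝ) ^ k) ≤ p := by exact_mod_cast hc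
      have ht1 : (2:ℝ) ^ k / p ≤ 1 := by rw [div_le_one hp0]; exact hcR
      have hsum : ∑ a : Fin k → Bool, |(N a : ℝ) / p - 1 / ((2:ℝ) ^ k)|
          ≤ (2:ℝ) ^ k / p := by
        calc ∑ a : Fin k → Bool, |(N a : ℝ) / p - 1 / ((2:ℝ) ^ k)|
            ≤ ∑ _a : Fin k → Bool, (1 / p : ℝ) := Finset.sum_le_sum fun a _ => hbd a
          _ = (2:ℝ) ^ k / p := by
              rw [Finset.sum_const, hcard, nsmul_eq_mul]
              push_cast
              ring
      have ht0 : (0:ℝ) ≤ (2:ℝ) ^ k / p := by positivity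
      have ht : (2:ℝ) ^ k / p ≤ Real.sqrt ((2:ℝ) ^ k / p) := by
        rw [Real.le_sqrt ht0 ht0]
        nlinarith [ht1, ht0]
      linarith
    · push_neg at hc
      have hcR : (p : ℝ) < (2:ℝ) ^ k := by exact_mod_cast hc
      have hsum : ∑ a : Fin k → Bool, |(N a : ℝ) / p - 1 / ((2:ℝ) ^ k)| ≤ 2 := by
        calc ∑ a : Fin k → Bool, |(N a : ℝ) / p - 1 / ((2:ℝ) ^ k)|
            ≤ ∑ a : Fin k → Bool, ((N a : ℝ) / p + 1 / ((2:ℝ) ^ k)) := by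
              apply Finset.sum_le_sum
              intro a _
              have h1 : (0:ℝ) ≤ (N a : ℝ) / p := by positivity
              have h2 : (0:ℝ) ≤ 1 / ((2:ℝ) ^ k) := by positivity
              rw [abs_le]; constructor <;> linarith
          _ = 2 := by
              rw [Finset.sum_add_distrib, ← Finset.sum_div, hsumN,
                Finset.sum_const, hcard, nsmul_eq_mul]
              push_cast
              rw [div_self (ne_of_gt hp0), mul_one_div, div_self (ne_of_gt h2k)]
              norm_num
      have ht : (1:ℝ) ≤ Real.sqrt ((2:ℝ) ^ k / p) := by
        rw [Real.one_le_sqrt, le_div_iff₀ hp0]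
        linarith
      linarith
  have hsimp : ∑ a : Fin k → Bool,
      |(Nat.card {u : Polynomial (ZMod p) // u ∈ G ∧ P u = a} : ℝ)
          / (Nat.card G : ℝ) - 1 / ((2 : ℝ) ^ k)|
      = ∑ a : Fin k → Bool, |(N a : ℝ) / p - 1 / ((2:ℝ) ^ k)| :=
    Finset.sum_congr rfl fun a _ => hterm a
  rw [hsimp]
  have hs : (0:ℝ) ≤ Real.sqrt (Real.logb 2 (p : ℝ)) / ((p : ℝ) + 1) := by positivity
  have hsq : (0:ℝ) ≤ Real.sqrt ((2:ℝ) ^ k / p) := Real.sqrt_nonneg _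
  nlinarith [main, mul_nonneg hsq hs]
end
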